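/- Let q̄ : S₂(ℂ) → (E'(ℂ) ∖ E'[2])/inv be the continuous map induced by the second projection (P,Q) ↦ Q. Then for every Q₀ ∈ E'(ℂ) ∖ E'[2], the fiber q̄⁻¹([Q₀]) (with the subspace topology) is homeomorphic to E(ℂ). -/

import Mathlib

open scoped LinearAlgebra.Projectivization
open Projectivization Complex

noncomputable section

/-- Complex projective plane `ℙ²(ℂ)` with the Euclidean (quotient) topology. -/
instance : TopologicalSpace (ℙ ℂ (Fin 3 → ℂ)) :=
  inferInstanceAs (TopologicalSpace (Quotient (projectivizationSetoid ℂ (Fin 3 → ℂ))))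

lemma ne010 : (![0, 1, 0] : Fin 3 → ℂ) ≠ 0 := fun h => by simpa using congrFun h 1
lemma ne001 : (![0, 0, 1] : Fin 3 → ℂ) ≠ 0 := fun h => by simpa using congrFun h 2
lemma neI01 : (![I, 0, 1] : Fin 3 → ℂ) ≠ 0 := fun h => by simpa using congrFun h 2
lemma nemI01 : (![-I, 0, 1] : Fin 3 → ℂ) ≠ 0 := fun h => by simpa using congrFun h 2

/-- The linear map `(x,y,z) ↦ (x,−y,z)` on `ℂ³`. -/
def negYlin : (Fin 3 → ℂ) →ₗ[ℂ] (Fin 3 → ℂ) where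
  toFun v := fun i => if i = 1 then -v i else v i
  map_add' v w := by
    funext i
    by_cases h : i = 1
    · simp [h, neg_add, add_comm]
    · simp [h]
  map_smul' c v := by funext i; by_cases h : i = 1 <;> simp [h]

lemma negYlin_comp : negYlin.comp negYlin = LinearMap.id := by
  ext v i
  by_cases h : i = 1 <;> simp [negYlin, h]

lemma negYlin_inj : Function.Injective negYlin := fun v w h => by
  have := congrArg negYlin h
  simpa [← LinearMap.comp_apply, negYlin_comp] using this

/-- The involution `inv : [x:y:z] ↦ [x:−y:z]` (negation on the curves) on `ℙ²(ℂ)`. -/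
def invP : ℙ ℂ (Fin 3 → ℂ) → ℙ ℂ (Fin 3 → ℂ) := Projectivization.map negYlin negYlin_inj

lemma negYlin_negYlin (v : Fin 3 → ℂ) : negYlin (negYlin v) = v := by
  funext i; by_cases h : i = 1 <;> simp [negYlin, h]

lemma invP_invol (p : ℙ ℂ (Fin 3 → ℂ)) : invP (invP p) = p := by
  induction p using Projectivization.ind with
  | h v hv =>
    simp only [invP, Projectivization.map_mk]
    exact (Projectivization.mk_eq_mk_iff' ℂ _ _ _ _).2 ⟨1, by simp [negYlin_negYlin]⟩

/-- `E(ℂ)`: the complex points of `y²z = x³ − 4xz²` in `ℙ²(ℂ)`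
(homogeneous coordinates `x, y, z` are `v 0, v 1, v 2`). -/
def Ecurve : Set (ℙ ℂ (Fin 3 → ℂ)) :=
  {p | ∃ (v : Fin 3 → ℂ) (hv : v ≠ 0), Projectivization.mk ℂ v hv = p ∧
    (v 1) ^ 2 * v 2 = (v 0) ^ 3 - 4 * v 0 * (v 2) ^ 2}

/-- `E'(ℂ)`: the complex points of `y²z = x³ + xz²` in `ℙ²(ℂ)`
(homogeneous coordinates `x, y, z` are `v 0, v 1, v 2`). -/
def E'curve : Set (ℙ ℂ (Fin 3 → ℂ)) :=
  {p | ∃ (v : Fin 3 → ℂ) (hv : v ≠ 0), Projectivization.mk ℂ v hv = p ∧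
    (v 1) ^ 2 * v 2 = (v 0) ^ 3 + v 0 * (v 2) ^ 2}

/-- The 2-torsion points `E'[2] = {[0:1:0], [0:0:1], [i:0:1], [−i:0:1]}` of `E'`. -/
def E'two : Set (ℙ ℂ (Fin 3 → ℂ)) :=
  {Projectivization.mk ℂ ![0, 1, 0] ne010, Projectivization.mk ℂ ![0, 0, 1] ne001,
   Projectivization.mk ℂ ![I, 0, 1] neI01, Projectivization.mk ℂ ![-I, 0, 1] nemI01}

/-- The underlying space of `S₂`: `E(ℂ) × (E'(ℂ) ∖ E'[2])`. -/
abbrev X2 : Type :=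
  {p : ℙ ℂ (Fin 3 → ℂ) × ℙ ℂ (Fin 3 → ℂ) // p.1 ∈ Ecurve ∧ p.2 ∈ E'curve ∧ p.2 ∉ E'two}

/-- Identification of `(P,Q)` with `(−P,−Q)` (the diagonal action of `inv`). -/
def s2Setoid : Setoid X2 where
  r a b := b.1 = a.1 ∨ (b.1.1 = invP a.1.1 ∧ b.1.2 = invP a.1.2)
  iseqv := by
    constructor
    · exact fun a => Or.inl rfl
    · rintro a b (h | ⟨h1, h2⟩)
      · exact Or.inl h.symm
      · exact Or.inr ⟨by rw [h1, invP_invol], by rw [h2, invP_invol]⟩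
    · rintro a b c (hb | ⟨hb1, hb2⟩) (hc | ⟨hc1, hc2⟩)
      · exact Or.inl (hc.trans hb)
      · exact Or.inr ⟨by rw [hc1, hb], by rw [hc2, hb]⟩
      · exact Or.inr ⟨by rw [hc, hb1], by rw [hc, hb2]⟩
      · exact Or.inl (Prod.ext (by rw [hc1, hb1, invP_invol]) (by rw [hc2, hb2, invP_invol]))

/-- `S₂(ℂ) = (E(ℂ) × (E'(ℂ) ∖ E'[2])) / inv`, with the quotient topology. -/
abbrev S2C : Type := Quotient s2Setoid

/-- The subspace `E'(ℂ) ∖ E'[2]` of `ℙ²(ℂ)`. -/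
abbrev E'openSub : Type := {p : ℙ ℂ (Fin 3 → ℂ) // p ∈ E'curve ∧ p ∉ E'two}

/-- Identification of `Q` with `−Q` on `E'(ℂ) ∖ E'[2]`. -/
def baseSetoid : Setoid E'openSub where
  r a b := b.1 = a.1 ∨ b.1 = invP a.1
  iseqv := by
    constructor
    · exact fun a => Or.inl rfl
    · rintro a b (h | h)
      · exact Or.inl h.symm
      · exact Or.inr (by rw [h, invP_invol])
    · rintro a b c (hb | hb) (hc | hc)
      · exact Or.inl (hc.trans hb)
      · exact Or.inr (by rw [hc, hb])
      · exact Or.inr (by rw [hc, hb])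
      · exact Or.inl (by rw [hc, hb, invP_invol])

/-- `(E'(ℂ) ∖ E'[2]) / inv`, with the quotient topology. -/
abbrev E'base : Type := Quotient baseSetoid

/-- The map `q̄ : S₂(ℂ) → (E'(ℂ) ∖ E'[2])/inv` induced by the second projection
`(P,Q) ↦ Q`. -/
def qbar : S2C → E'base :=
  Quotient.map' (fun a => ⟨a.1.2, a.2.2.1, a.2.2.2⟩)
    (by rintro a b (h | ⟨h1, h2⟩)
        · exact Or.inl (congrArg Prod.snd h)
        · exact Or.inr h2)
-- ===== auxiliary lemmas =====

abbrev P2 := ℙ ℂ (Fin 3 → ℂ)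

lemma mem_Ecurve_iff (v : Fin 3 → ℂ) (hv : v ≠ 0) :
    Projectivization.mk ℂ v hv ∈ Ecurve ↔
      (v 1) ^ 2 * v 2 = (v 0) ^ 3 - 4 * v 0 * (v 2) ^ 2 := by
  constructor
  · rintro ⟨w, hw, hmk, heq⟩
    obtain ⟨a, ha⟩ := (mk_eq_mk_iff' ℂ w v hw hv).1 hmk
    have ha0 : a ≠ 0 := by rintro rfl; simp at ha; exact hw ha.symm
    have e0 : w 0 = a * v 0 := by rw [← ha]; rfl
    have e1 : w 1 = a * v 1 := by rw [← ha]; rfl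
    have e2 : w 2 = a * v 2 := by rw [← ha]; rfl
    rw [e0, e1, e2] at heq
    have := pow_ne_zero 3 ha0
    apply mul_left_cancel₀ this
    ring_nf
    ring_nf at heq
    linear_combination heq
  · intro h
    exact ⟨v, hv, rfl, h⟩

lemma mem_E'curve_iff (v : Fin 3 → ℂ) (hv : v ≠ 0) :
    Projectivization.mk ℂ v hv ∈ E'curve ↔
      (v 1) ^ 2 * v 2 = (v 0) ^ 3 + v 0 * (v 2) ^ 2 := by
  constructor
  · rintro ⟨w, hw, hmk, heq⟩
    obtain ⟨a, ha⟩ := (mk_eq_mk_iff' ℂ w v hw hv).1 hmk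
    have ha0 : a ≠ 0 := by rintro rfl; simp at ha; exact hw ha.symm
    have e0 : w 0 = a * v 0 := by rw [← ha]; rfl
    have e1 : w 1 = a * v 1 := by rw [← ha]; rfl
    have e2 : w 2 = a * v 2 := by rw [← ha]; rfl
    rw [e0, e1, e2] at heq
    have := pow_ne_zero 3 ha0
    apply mul_left_cancel₀ this
    ring_nf
    ring_nf at heq
    linear_combination heq
  · intro h
    exact ⟨v, hv, rfl, h⟩

lemma negYlin_apply (v : Fin 3 → ℂ) :
    negYlin v 0 = v 0 ∧ negYlin v 1 = -v 1 ∧ negYlin v 2 = v 2 := by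
  refine ⟨?_, ?_, ?_⟩ <;> simp [negYlin]

lemma negYlin_ne_zero {v : Fin 3 → ℂ} (hv : v ≠ 0) : negYlin v ≠ 0 :=
  fun h => hv (negYlin_inj (by simpa using h))

lemma invP_mk (v : Fin 3 → ℂ) (hv : v ≠ 0) :
    invP (Projectivization.mk ℂ v hv) = Projectivization.mk ℂ (negYlin v) (negYlin_ne_zero hv) :=
  rfl

lemma invP_mem_Ecurve {p : P2} (h : p ∈ Ecurve) : invP p ∈ Ecurve := by
  induction p using Projectivization.ind with
  | h v hv =>
    rw [mem_Ecurve_iff] at h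
    rw [invP_mk, mem_Ecurve_iff]
    obtain ⟨h0, h1, h2⟩ := negYlin_apply v
    rw [h0, h1, h2]
    linear_combination h

lemma invP_mem_E'curve {p : P2} (h : p ∈ E'curve) : invP p ∈ E'curve := by
  induction p using Projectivization.ind with
  | h v hv =>
    rw [mem_E'curve_iff] at h
    rw [invP_mk, mem_E'curve_iff]
    obtain ⟨h0, h1, h2⟩ := negYlin_apply v
    rw [h0, h1, h2]
    linear_combination h
lemma invP_fix_E'two {p : P2} (h : p ∈ E'two) : invP p = p := by
  rcases h with h | h | h | h <;> subst h <;> rw [invP_mk] <;>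
    rw [mk_eq_mk_iff' ℂ]
  · exact ⟨-1, by funext i; fin_cases i <;> simp [negYlin]⟩
  · exact ⟨1, by funext i; fin_cases i <;> simp [negYlin]⟩
  · exact ⟨1, by funext i; fin_cases i <;> simp [negYlin]⟩
  · exact ⟨1, by funext i; fin_cases i <;> simp [negYlin]⟩

lemma invP_not_mem_E'two {p : P2} (h : p ∉ E'two) : invP p ∉ E'two := by
  intro hmem
  apply h
  have h2 := invP_fix_E'two hmem
  rw [invP_invol] at h2
  rw [h2]; exact hmem

/-- If `Q ∈ E'(ℂ)` is fixed by the involution then it is `2`-torsion. -/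
lemma fixed_mem_E'two {p : P2} (hp : p ∈ E'curve) (hfix : invP p = p) : p ∈ E'two := by
  induction p using Projectivization.ind with
  | h v hv =>
    rw [mem_E'curve_iff] at hp
    rw [invP_mk, mk_eq_mk_iff' ℂ] at hfix
    obtain ⟨a, ha⟩ := hfix
    obtain ⟨n0, n1, n2⟩ := negYlin_apply v
    have e0 : a * v 0 = v 0 := by have := congrFun ha 0; rw [n0] at this; simpa using this
    have e1 : a * v 1 = -v 1 := by have := congrFun ha 1; rw [n1] at this; simpa using this
    have e2 : a * v 2 = v 2 := by have := congrFun ha 2; rw [n2] at this; simpa using this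
    by_cases h1 : v 1 = 0
    · -- y = 0 : then x(x+iz)(x-iz) = 0
      have h2' : v 0 ^ 3 + v 0 * v 2 ^ 2 = 0 := by rw [← hp, h1]; ring
      have key : v 0 * ((v 0 + I * v 2) * (v 0 - I * v 2)) = 0 := by
        linear_combination h2' - v 0 * v 2 ^ 2 * Complex.I_sq
      by_cases h2 : v 2 = 0
      · exfalso
        have h0 : v 0 = 0 := by
          have h3 : v 0 ^ 3 = 0 := by rw [h1, h2] at hp; linear_combination -hp
          exact pow_eq_zero_iff (n := 3) (by norm_num) |>.1 h3
        exact hv (by funext i; fin_cases i <;> simp [h0, h1, h2])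
      · rcases mul_eq_zero.1 key with h0 | key2
        · -- [0:0:1]
          right; left
          show Projectivization.mk ℂ v hv = _
          rw [mk_eq_mk_iff' ℂ]
          exact ⟨v 2, by funext i; fin_cases i <;> simp [h0, h1]⟩
        · rcases mul_eq_zero.1 key2 with hk | hk
          · -- v 0 = -I * v 2 : [-I:0:1]
            right; right; right
            show Projectivization.mk ℂ v hv = _
            rw [mk_eq_mk_iff' ℂ]
            refine ⟨v 2, funext fun i => ?_⟩
            fin_cases i <;> simp [h1]
            · linear_combination -hk
          · -- v 0 = I * v 2 : [I:0:1]
            right; right; left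
            show Projectivization.mk ℂ v hv = _
            rw [mk_eq_mk_iff' ℂ]
            refine ⟨v 2, funext fun i => ?_⟩
            fin_cases i <;> simp [h1]
            · linear_combination -hk
    · -- y ≠ 0 : a = -1, so x = z = 0, point is [0:1:0]
      have hane : a = -1 := by
        have hsum : (a + 1) * v 1 = 0 := by linear_combination e1
        rcases mul_eq_zero.1 hsum with h | h
        · linear_combination h
        · exact absurd h h1
      have h0 : v 0 = 0 := by
        rw [hane] at e0; linear_combination -(e0/2)
      have h2 : v 2 = 0 := by
        rw [hane] at e2; linear_combination -(e2/2)
      left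
      show Projectivization.mk ℂ v hv = _
      rw [mk_eq_mk_iff' ℂ]
      exact ⟨v 1, by funext i; fin_cases i <;> simp [h0, h2]⟩
abbrev NZ := {v : Fin 3 → ℂ // v ≠ 0}

/-- The quotient map `ℂ³∖{0} → ℙ²(ℂ)`. -/
def mkP2 : NZ → P2 := fun x => Projectivization.mk ℂ x.1 x.2

lemma isQuotientMap_mkP2 : Topology.IsQuotientMap mkP2 := isQuotientMap_quot_mk

lemma continuous_mkP2 : Continuous mkP2 := isQuotientMap_mkP2.continuous

lemma continuous_invP : Continuous invP := by
  rw [isQuotientMap_mkP2.continuous_iff]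
  have : invP ∘ mkP2 = fun x : NZ => Projectivization.mk ℂ (negYlin x.1) (negYlin_ne_zero x.2) :=
    funext fun x => invP_mk _ _
  rw [this]
  show Continuous (mkP2 ∘ fun x : NZ => (⟨negYlin x.1, negYlin_ne_zero x.2⟩ : NZ))
  exact continuous_mkP2.comp (Continuous.subtype_mk
    (negYlin.continuous_of_finiteDimensional.comp continuous_subtype_val) _)

/-- `⟨v,v⟩` as a complex number. -/
def nrmC (v : Fin 3 → ℂ) : ℂ := ∑ k, v k * (starRingEnd ℂ) (v k)

lemma nrmC_eq (v : Fin 3 → ℂ) : nrmC v = ((∑ k, Complex.normSq (v k) : ℝ) : ℂ) := by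
  simp [nrmC, Complex.mul_conj]

lemma nrmC_ne_zero {v : Fin 3 → ℂ} (hv : v ≠ 0) : nrmC v ≠ 0 := by
  rw [nrmC_eq]
  rw [Ne, Complex.ofReal_eq_zero]
  intro h
  apply hv
  funext k
  have hk := (Finset.sum_eq_zero_iff_of_nonneg
    (fun i _ => Complex.normSq_nonneg (v i))).1 h k (Finset.mem_univ k)
  simpa using Complex.normSq_eq_zero.1 hk

/-- The continuous injection `ℙ² → Mat₃(ℂ)`, `[v] ↦ v v* / ⟨v,v⟩`. -/
def matM (v : Fin 3 → ℂ) : Fin 3 → Fin 3 → ℂ :=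
  fun i j => v i * (starRingEnd ℂ) (v j) / nrmC v

lemma nrmC_smul (c : ℂ) (v : Fin 3 → ℂ) :
    nrmC (c • v) = (c * (starRingEnd ℂ) c) * nrmC v := by
  simp only [nrmC, Pi.smul_apply, smul_eq_mul, map_mul, Finset.mul_sum]
  exact Finset.sum_congr rfl fun k _ => by ring

lemma matM_smul {c : ℂ} (hc : c ≠ 0) (v : Fin 3 → ℂ) : matM (c • v) = matM v := by
  have hcc : c * (starRingEnd ℂ) c ≠ 0 :=
    mul_ne_zero hc ((map_ne_zero (starRingEnd ℂ)).2 hc)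
  funext i j
  simp only [matM, Pi.smul_apply, smul_eq_mul, map_mul, nrmC_smul]
  rw [show c * v i * ((starRingEnd ℂ) c * (starRingEnd ℂ) (v j))
      = (c * (starRingEnd ℂ) c) * (v i * (starRingEnd ℂ) (v j)) by ring,
    mul_div_mul_left _ _ hcc]

lemma matM_inj {v w : Fin 3 → ℂ} (hv : v ≠ 0) (hw : w ≠ 0) (h : matM v = matM w) :
    ∃ a : ℂ, a • w = v := by
  have hnv := nrmC_ne_zero hv
  have hnw := nrmC_ne_zero hw
  obtain ⟨k, hvk⟩ : ∃ k, v k ≠ 0 := by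
    by_contra hc
    push_neg at hc
    exact hv (funext fun k => hc k)
  have hkk := congrFun (congrFun h k) k
  have hwk : w k ≠ 0 := by
    intro h0
    dsimp only [matM] at hkk
    rw [h0] at hkk
    simp only [matM, zero_mul, zero_div] at hkk
    rcases div_eq_zero_iff.1 hkk with h1 | h1
    · exact hvk (by simpa using mul_eq_zero.1 h1)
    · exact hnv h1
  have hcvk : (starRingEnd ℂ) (v k) ≠ 0 := (map_ne_zero _).2 hvk
  have hcwk : (starRingEnd ℂ) (w k) ≠ 0 := (map_ne_zero _).2 hwk
  refine ⟨((starRingEnd ℂ) (w k) * nrmC v) / ((starRingEnd ℂ) (v k) * nrmC w),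
    funext fun i => ?_⟩
  have hik := congrFun (congrFun h i) k
  simp only [matM] at hik
  rw [div_eq_div_iff hnv hnw] at hik
  show _ * w i = v i
  rw [div_mul_eq_mul_div, div_eq_iff (mul_ne_zero hcvk hnw)]
  linear_combination -hik

/- helper: `mul_eq_zero.1 h1` above gives `v k = 0 ∨ conj (v k) = 0`; `simpa` picks. -/

def Fmat : P2 → (Fin 3 → Fin 3 → ℂ) :=
  Quotient.lift (fun x : NZ => matM x.1)
    (by
      intro a b hab
      have hmk : Projectivization.mk ℂ a.1 a.2 = Projectivization.mk ℂ b.1 b.2 :=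
        Quotient.sound hab
      obtain ⟨c, hc⟩ := (mk_eq_mk_iff' ℂ _ _ a.2 b.2).1 hmk
      have hc0 : c ≠ 0 := by rintro rfl; simp at hc; exact a.2 hc.symm
      rw [← hc, matM_smul hc0])

lemma Fmat_mk (v : Fin 3 → ℂ) (hv : v ≠ 0) : Fmat (Projectivization.mk ℂ v hv) = matM v := rfl

lemma continuous_Fmat : Continuous Fmat := by
  apply continuous_quot_lift
  refine continuous_pi fun i => continuous_pi fun j => Continuous.div ?_ ?_ ?_
  · exact ((continuous_apply i).comp continuous_subtype_val).mul
      (Complex.continuous_conj.comp ((continuous_apply j).comp continuous_subtype_val))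
  · exact continuous_finset_sum _ fun k _ =>
      ((continuous_apply k).comp continuous_subtype_val).mul
        (Complex.continuous_conj.comp ((continuous_apply k).comp continuous_subtype_val))
  · exact fun x => nrmC_ne_zero x.2

lemma Fmat_injective : Function.Injective Fmat := by
  intro p q h
  induction p using Projectivization.ind with
  | h v hv =>
  induction q using Projectivization.ind with
  | h w hw =>
    rw [Fmat_mk, Fmat_mk] at h
    exact (mk_eq_mk_iff' ℂ v w hv hw).2 (matM_inj hv hw h)

instance : T2Space P2 := T2Space.of_injective_continuous Fmat_injective continuous_Fmat

instance : CompactSpace P2 := by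
  set f : Metric.sphere (0 : Fin 3 → ℂ) 1 → P2 :=
    (fun s => mkP2 ⟨s.1, ne_zero_of_mem_unit_sphere s⟩) with hf
  have hcont : Continuous f := continuous_mkP2.comp (continuous_subtype_val.subtype_mk _)
  have hsurj : Function.Surjective f := by
    intro p
    induction p using Projectivization.ind with
    | h v hv =>
      have hnv : ‖v‖ ≠ 0 := norm_ne_zero_iff.2 hv
      refine ⟨⟨((‖v‖⁻¹ : ℝ) : ℂ) • v, ?_⟩, ?_⟩
      · rw [mem_sphere_zero_iff_norm, norm_smul]
        simp [_root_.abs_of_nonneg (norm_nonneg v), hnv]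
      · exact (mk_eq_mk_iff' ℂ _ v (by
          intro h0
          apply hnv
          have : (((‖v‖⁻¹ : ℝ) : ℂ)) ≠ 0 := by
            simp [Complex.ofReal_eq_zero, hnv]
          have := smul_eq_zero.1 h0
          tauto) hv).2 ⟨((‖v‖⁻¹ : ℝ) : ℂ), rfl⟩
  exact ⟨hsurj.range_eq ▸ isCompact_range hcont⟩

lemma isClosed_Ecurve : IsClosed Ecurve := by
  rw [← isQuotientMap_mkP2.isClosed_preimage]
  have hset : mkP2 ⁻¹' Ecurve
      = {x : NZ | (x.1 1) ^ 2 * x.1 2 = (x.1 0) ^ 3 - 4 * x.1 0 * (x.1 2) ^ 2} := by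
    ext x
    exact mem_Ecurve_iff x.1 x.2
  rw [hset]
  have c0 : Continuous fun x : NZ => x.1 0 := (continuous_apply 0).comp continuous_subtype_val
  have c1 : Continuous fun x : NZ => x.1 1 := (continuous_apply 1).comp continuous_subtype_val
  have c2 : Continuous fun x : NZ => x.1 2 := (continuous_apply 2).comp continuous_subtype_val
  exact isClosed_eq ((c1.pow 2).mul c2)
    (((c0.pow 3)).sub ((continuous_const.mul c0).mul (c2.pow 2)))

instance : CompactSpace ↥Ecurve :=
  isCompact_iff_compactSpace.1 (isClosed_Ecurve.isCompact)
/-- The diagonal involution on `X2`. -/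
def sigmaX : X2 → X2 := fun x =>
  ⟨(invP x.1.1, invP x.1.2),
    invP_mem_Ecurve x.2.1, invP_mem_E'curve x.2.2.1, invP_not_mem_E'two x.2.2.2⟩

lemma sigmaX_invol (x : X2) : sigmaX (sigmaX x) = x :=
  Subtype.ext (Prod.ext (invP_invol _) (invP_invol _))

lemma continuous_sigmaX : Continuous sigmaX :=
  Continuous.subtype_mk
    (((continuous_invP.comp continuous_fst).prodMk
      (continuous_invP.comp continuous_snd)).comp continuous_subtype_val) _

lemma rel_iff (x y : X2) : s2Setoid.r x y ↔ y = x ∨ y = sigmaX x := by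
  constructor
  · rintro (h | ⟨h1, h2⟩)
    · exact Or.inl (Subtype.ext h)
    · exact Or.inr (Subtype.ext (Prod.ext h1 h2))
  · rintro (rfl | rfl)
    · exact Or.inl rfl
    · exact Or.inr ⟨rfl, rfl⟩

lemma isOpenMap_mkS2 : IsOpenMap (Quotient.mk s2Setoid) := by
  intro U hU
  have hpre : Quotient.mk s2Setoid ⁻¹' (Quotient.mk s2Setoid '' U) = U ∪ sigmaX ⁻¹' U := by
    ext x
    constructor
    · rintro ⟨u, hu, hque⟩
      have hrel : s2Setoid.r u x := Quotient.exact hque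
      rcases (rel_iff u x).1 hrel with rfl | rfl
      · exact Or.inl hu
      · right
        show sigmaX (sigmaX u) ∈ U
        rw [sigmaX_invol]
        exact hu
    · rintro (hx | hx)
      · exact ⟨x, hx, rfl⟩
      · exact ⟨sigmaX x, hx, Quotient.sound ((rel_iff (sigmaX x) x).2
          (Or.inr (sigmaX_invol x).symm))⟩
  have : IsOpen (Quotient.mk s2Setoid ⁻¹' (Quotient.mk s2Setoid '' U)) := by
    rw [hpre]
    exact hU.union (continuous_sigmaX.isOpen_preimage U hU)
  exact this

instance : T2Space S2C := by
  refine ⟨fun {a b} hab => ?_⟩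
  induction a using Quotient.inductionOn with
  | h x =>
  induction b using Quotient.inductionOn with
  | h y =>
    have hxy : ¬ s2Setoid.r x y := fun h => hab (Quotient.sound h)
    have h1 : x ≠ y := fun h => hxy ((rel_iff x y).2 (Or.inl h.symm))
    have h2 : sigmaX x ≠ y := fun h => hxy ((rel_iff x y).2 (Or.inr h.symm))
    have h3 : x ≠ sigmaX y := by
      intro h
      exact h2 (by rw [h, sigmaX_invol])
    have h4 : sigmaX x ≠ sigmaX y := by
      intro h
      apply h1
      have := congrArg sigmaX h
      rwa [sigmaX_invol, sigmaX_invol] at this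
    obtain ⟨U1, V1, hU1, hV1, hxU1, hyV1, hd1⟩ := t2_separation h1
    obtain ⟨U2, V2, hU2, hV2, hxU2, hyV2, hd2⟩ := t2_separation h3
    obtain ⟨U3, V3, hU3, hV3, hxU3, hyV3, hd3⟩ := t2_separation h2
    obtain ⟨U4, V4, hU4, hV4, hxU4, hyV4, hd4⟩ := t2_separation h4
    set W : Set X2 := (U1 ∩ U2) ∪ (U3 ∩ U4) with hW
    set Z : Set X2 := (V1 ∩ V3) ∪ (V2 ∩ V4) with hZ
    have hWopen : IsOpen W := ((hU1.inter hU2).union (hU3.inter hU4))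
    have hZopen : IsOpen Z := ((hV1.inter hV3).union (hV2.inter hV4))
    have hWZ : ∀ p, p ∈ W → p ∈ Z → False := by
      rintro p (⟨ha, hb⟩ | ⟨ha, hb⟩) (⟨hc, hd⟩ | ⟨hc, hd⟩)
      · exact Set.disjoint_left.1 hd1 ha hc
      · exact Set.disjoint_left.1 hd2 hb hc
      · exact Set.disjoint_left.1 hd3 ha hd
      · exact Set.disjoint_left.1 hd4 hb hd
    set W' : Set X2 := W ∩ sigmaX ⁻¹' W with hW'
    set Z' : Set X2 := Z ∩ sigmaX ⁻¹' Z with hZ'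
    refine ⟨Quotient.mk s2Setoid '' W', Quotient.mk s2Setoid '' Z',
      isOpenMap_mkS2 _ (hWopen.inter (continuous_sigmaX.isOpen_preimage _ hWopen)),
      isOpenMap_mkS2 _ (hZopen.inter (continuous_sigmaX.isOpen_preimage _ hZopen)),
      ⟨x, ⟨Or.inl ⟨hxU1, hxU2⟩, Or.inr ⟨hxU3, hxU4⟩⟩, rfl⟩,
      ⟨y, ⟨Or.inl ⟨hyV1, hyV3⟩, Or.inr ⟨hyV2, hyV4⟩⟩, rfl⟩, ?_⟩
    rw [Set.disjoint_left]
    rintro s ⟨w, hw, rfl⟩ ⟨z, hz, hqe⟩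
    have hrel := Quotient.exact hqe
    rcases (rel_iff z w).1 hrel with h | h
    · rw [h] at hw
      exact hWZ z hw.1 hz.1
    · rw [h] at hw
      exact hWZ (sigmaX z) hw.1 hz.2
/-- every fiber of `q̄ : S₂(ℂ) → (E'(ℂ) ∖ E'[2])/inv` (the map induced by the
second projection `(P,Q) ↦ Q`) is homeomorphic to `E(ℂ)`. -/
theorem qbar_fiber_homeo_Ecurve :
    ∀ Q₀ : E'openSub,
      Nonempty (↥(qbar ⁻¹' {Quotient.mk baseSetoid Q₀}) ≃ₜ ↥Ecurve) := by
  intro Q₀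
  have hQfix : invP Q₀.1 ≠ Q₀.1 := fun h => Q₀.2.2 (fixed_mem_E'two Q₀.2.1 h)
  let toF : ↥Ecurve → ↥(qbar ⁻¹' {Quotient.mk baseSetoid Q₀}) := fun P =>
    ⟨Quotient.mk s2Setoid ⟨(P.1, Q₀.1), P.2, Q₀.2.1, Q₀.2.2⟩, by
      simp only [Set.mem_preimage, Set.mem_singleton_iff]
      rfl⟩
  have hinj : Function.Injective toF := by
    intro P P' h
    have h2 : Quotient.mk s2Setoid ⟨(P.1, Q₀.1), P.2, Q₀.2.1, Q₀.2.2⟩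
        = Quotient.mk s2Setoid ⟨(P'.1, Q₀.1), P'.2, Q₀.2.1, Q₀.2.2⟩ := congrArg Subtype.val h
    rcases Quotient.exact h2 with hEq | ⟨h1', h2'⟩
    · exact Subtype.ext (congrArg Prod.fst hEq).symm
    · exact absurd h2'.symm hQfix
  have hsurj : Function.Surjective toF := by
    rintro ⟨s, hs⟩
    induction s using Quotient.inductionOn with
    | h x =>
      have hs' : Quotient.mk baseSetoid ⟨x.1.2, x.2.2.1, x.2.2.2⟩
          = Quotient.mk baseSetoid Q₀ := hs
      rcases Quotient.exact hs' with h | h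
      · refine ⟨⟨x.1.1, x.2.1⟩, Subtype.ext ?_⟩
        exact Quotient.sound (Or.inl (Prod.ext rfl h.symm))
      · refine ⟨⟨invP x.1.1, invP_mem_Ecurve x.2.1⟩, Subtype.ext ?_⟩
        refine Quotient.sound (Or.inr ⟨(invP_invol _).symm, ?_⟩)
        show x.1.2 = invP (Q₀.1)
        rw [h, invP_invol]
  have hcont : Continuous toF := by
    apply Continuous.subtype_mk
    show Continuous ((Quotient.mk s2Setoid) ∘
      fun P : ↥Ecurve => (⟨(P.1, Q₀.1), P.2, Q₀.2.1, Q₀.2.2⟩ : X2))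
    exact continuous_quot_mk.comp
      (Continuous.subtype_mk (continuous_subtype_val.prodMk continuous_const) _)
  let e : ↥Ecurve ≃ ↥(qbar ⁻¹' {Quotient.mk baseSetoid Q₀}) :=
    Equiv.ofBijective toF ⟨hinj, hsurj⟩
  exact ⟨(Continuous.homeoOfEquivCompactToT2 (f := e) hcont).symm⟩
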